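/- Let ρ₁, ρ₂, ρ₃ be complex numbers with ρ₁ + ρ₂ + ρ₃ = 0. Define ξ = (1/4)(|ρ₁|² + |ρ₂|² + |ρ₃|²), χ = (1/4)(|ρ₁|⁴ + |ρ₂|⁴ + |ρ₃|⁴) and α = (1/2)|ρ₁² + ρ₂² + ρ₃²|. Then 8ξ² + α² = 6χ. -/

import Mathlib

/-- The scalar constraint `8ξ² + α² = 6χ` on the Bel–Robinson eigenvalues,
where `ρ₁, ρ₂, ρ₃` are the (traceless) Weyl eigenvalues. -/
theorem belRobinson_scalar_constraint (ρ₁ ρ₂ ρ₃ : ℂ) (hsum : ρ₁ + ρ₂ + ρ₃ = 0)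
    (ξ χ α : ℝ)
    (hξ : ξ = (1/4) * (‖ρ₁‖ ^ 2 + ‖ρ₂‖ ^ 2 + ‖ρ₃‖ ^ 2))
    (hχ : χ = (1/4) * (‖ρ₁‖ ^ 4 + ‖ρ₂‖ ^ 4 + ‖ρ₃‖ ^ 4))
    (hα : α = (1/2) * ‖ρ₁ ^ 2 + ρ₂ ^ 2 + ρ₃ ^ 2‖) :
    8 * ξ ^ 2 + α ^ 2 = 6 * χ := by
  have h3 : ρ₃ = -ρ₁ - ρ₂ := by linear_combination hsum
  subst h3 hξ hχ hα
  have hsq : ∀ z : ℂ, ‖z‖ ^ 2 = z.re ^ 2 + z.im ^ 2 := by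
    intro z; rw [Complex.sq_norm, Complex.normSq_apply]; ring
  have h4 : ∀ z : ℂ, ‖z‖ ^ 4 = (z.re ^ 2 + z.im ^ 2) ^ 2 := by
    intro z; rw [show (4:ℕ) = 2*2 from rfl, pow_mul, hsq]
  have hz : (ρ₁ ^ 2 + ρ₂ ^ 2 + (-ρ₁ - ρ₂) ^ 2).re = 2*(ρ₁.re^2 - ρ₁.im^2) + 2*(ρ₂.re^2 - ρ₂.im^2) + 2*(ρ₁.re*ρ₂.re - ρ₁.im*ρ₂.im) := by
    simp [pow_two, Complex.mul_re, Complex.add_re, Complex.sub_re, Complex.neg_re,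
      Complex.sub_im, Complex.neg_im]
    ring
  have hz' : (ρ₁ ^ 2 + ρ₂ ^ 2 + (-ρ₁ - ρ₂) ^ 2).im = 4*ρ₁.re*ρ₁.im + 4*ρ₂.re*ρ₂.im + 2*(ρ₁.re*ρ₂.im + ρ₁.im*ρ₂.re) := by
    simp [pow_two, Complex.mul_im, Complex.add_im, Complex.sub_re, Complex.sub_im,
      Complex.neg_re, Complex.neg_im]
    ring
  rw [mul_pow, mul_pow, hsq, hsq, hsq, hsq, h4, h4, h4, hz, hz']
  simp only [Complex.sub_re, Complex.sub_im, Complex.neg_re, Complex.neg_im]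
  ring
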